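/- Let G be a finitely generated group such that 1 is not in the roundness spectrum of G, i.e., for every finite symmetric generating set Σ of G (with identity ∉ Σ), the roundness of (G, d_Σ) is not equal to 1. Then G is a torsion group in which every non-identity element has order 2, 3, 5 or 7. -/

import Mathlib

/-- The set of exponents `q ≥ 1` for which the roundness inequality holds for all
quadruples of points, with respect to the distance function `d`. -/
noncomputable def roundnessSet {X : Type*} (d : X → X → ℝ) : Set ℝ :=
  {q : ℝ | 1 ≤ q ∧ ∀ x00 x01 x10 x11 : X,
    d x00 x11 ^ q + d x01 x10 ^ q ≤
      d x00 x01 ^ q + d x00 x10 ^ q + d x11 x01 ^ q + d x11 x10 ^ q}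

/-- The roundness of a distance function `d` on `X`: the supremum (in `EReal`) of all
exponents `q ≥ 1` for which the roundness inequality holds for all quadruples. -/
noncomputable def roundness {X : Type*} (d : X → X → ℝ) : EReal :=
  sSup ((fun q : ℝ => (q : EReal)) '' roundnessSet d)
/-- The word length of `g` with respect to a generating set `S`:
the least `n` such that `g` is a product of `n` elements of `S`. -/
noncomputable def wordLength {G : Type*} [Group G] (S : Set G) (g : G) : ℕ :=
  sInf {n : ℕ | ∃ l : List G, l.length = n ∧ (∀ x ∈ l, x ∈ S) ∧ l.prod = g}

/-- The word metric on a group `G` associated to a generating set `S`. -/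
noncomputable def wordDist {G : Type*} [Group G] (S : Set G) (g h : G) : ℝ :=
  wordLength S (g⁻¹ * h)

namespace RoundnessAux

variable {G : Type*} [Group G] {S : Set G}

def reprSet (S : Set G) (x : G) : Set ℕ :=
  {n : ℕ | ∃ l : List G, l.length = n ∧ (∀ y ∈ l, y ∈ S) ∧ l.prod = x}

lemma wordLength_eq (S : Set G) (x : G) : wordLength S x = sInf (reprSet S x) := rfl

lemma wl_le {x : G} {l : List G} (hl : ∀ y ∈ l, y ∈ S) (hp : l.prod = x) :
    wordLength S x ≤ l.length := Nat.sInf_le ⟨l, rfl, hl, hp⟩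

lemma exists_repr (hsymm : ∀ s ∈ S, s⁻¹ ∈ S) (hgen : Subgroup.closure S = ⊤) (x : G) :
    ∃ l : List G, (∀ y ∈ l, y ∈ S) ∧ l.prod = x := by
  have hx : x ∈ (Subgroup.closure S).toSubmonoid := by
    rw [hgen]; trivial
  rw [Subgroup.closure_toSubmonoid] at hx
  obtain ⟨l, hl, hp⟩ := Submonoid.exists_list_of_mem_closure hx
  refine ⟨l, fun y hy => ?_, hp⟩
  rcases hl y hy with h | h
  · exact h
  · have := hsymm _ h; simpa using this

lemma exists_min_repr (hsymm : ∀ s ∈ S, s⁻¹ ∈ S) (hgen : Subgroup.closure S = ⊤) (x : G) :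
    ∃ l : List G, (∀ y ∈ l, y ∈ S) ∧ l.prod = x ∧ l.length = wordLength S x := by
  obtain ⟨l0, hl0, hp0⟩ := exists_repr hsymm hgen x
  have hne : (reprSet S x).Nonempty := ⟨l0.length, l0, rfl, hl0, hp0⟩
  obtain ⟨l, hlen, hl, hp⟩ := Nat.sInf_mem hne
  exact ⟨l, hl, hp, hlen⟩

lemma wl_mul_le (hsymm : ∀ s ∈ S, s⁻¹ ∈ S) (hgen : Subgroup.closure S = ⊤) (x y : G) :
    wordLength S (x * y) ≤ wordLength S x + wordLength S y := by
  obtain ⟨lx, hlx, hpx, hlenx⟩ := exists_min_repr hsymm hgen x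
  obtain ⟨ly, hly, hpy, hleny⟩ := exists_min_repr hsymm hgen y
  have : wordLength S (x * y) ≤ (lx ++ ly).length := by
    refine wl_le (fun z hz => ?_) (by rw [List.prod_append, hpx, hpy])
    rcases List.mem_append.mp hz with h | h
    · exact hlx _ h
    · exact hly _ h
  simpa [List.length_append, hlenx, hleny] using this

lemma wl_inv (hsymm : ∀ s ∈ S, s⁻¹ ∈ S) (x : G) :
    wordLength S x⁻¹ = wordLength S x := by
  have hsub : ∀ z : G, reprSet S z ⊆ reprSet S z⁻¹ := by
    rintro z n ⟨l, hlen, hl, hp⟩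
    refine ⟨(l.map fun a => a⁻¹).reverse, by simp [hlen], ?_, ?_⟩
    · intro y hy
      simp only [List.mem_reverse, List.mem_map] at hy
      obtain ⟨a, ha, rfl⟩ := hy
      exact hsymm _ (hl _ ha)
    · rw [← List.prod_inv_reverse, hp]
  have h2 := hsub x⁻¹
  rw [inv_inv] at h2
  have : reprSet S x⁻¹ = reprSet S x := le_antisymm h2 (hsub x)
  rw [wordLength_eq, wordLength_eq, this]

lemma wl_one_of_mem {x₀ : G} (hx : x₀ ∈ S) (hne : x₀ ≠ (1 : G)) : wordLength S x₀ = 1 := by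
  have h1 : (1 : ℕ) ∈ reprSet S x₀ := ⟨[x₀], rfl, by simpa using hx, by simp⟩
  have h0 : (0 : ℕ) ∉ reprSet S x₀ := by
    rintro ⟨l, hlen, -, hp⟩
    rw [List.length_eq_zero_iff] at hlen
    subst hlen; simp at hp; exact hne hp.symm
  have hle := Nat.sInf_le h1
  have hmem := Nat.sInf_mem ⟨1, h1⟩
  rw [wordLength_eq]
  interval_cases h : sInf (reprSet S x₀)
  · exact absurd hmem h0
  · rfl

lemma wl_two (x₀ a b : G) (ha : a ∈ S) (hb : b ∈ S) (hab : a * b = x₀)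
    (hne1 : x₀ ≠ 1) (hnS : x₀ ∉ S) : wordLength S x₀ = 2 := by
  have h2 : (2 : ℕ) ∈ reprSet S x₀ := ⟨[a, b], rfl, by
    intro y hy
    simp only [List.mem_cons, List.mem_singleton, List.not_mem_nil, or_false] at hy
    rcases hy with rfl | rfl
    · exact ha
    · exact hb, by simpa using hab⟩
  have h0 : (0 : ℕ) ∉ reprSet S x₀ := by
    rintro ⟨l, hlen, -, hp⟩
    rw [List.length_eq_zero_iff] at hlen
    subst hlen; simp at hp; exact hne1 hp.symm
  have h1 : (1 : ℕ) ∉ reprSet S x₀ := by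
    rintro ⟨l, hlen, hl, hp⟩
    rw [List.length_eq_one_iff] at hlen
    obtain ⟨c, rfl⟩ := hlen
    simp at hp; subst hp
    exact hnS (hl _ (by simp))
  have hle := Nat.sInf_le h2
  have hmem := Nat.sInf_mem ⟨2, h2⟩
  rw [wordLength_eq]
  interval_cases h : sInf (reprSet S x₀)
  · exact absurd hmem h0
  · exact absurd hmem h1
  · rfl

end RoundnessAux

open RoundnessAux

/-- If `G` is a finitely generated group such that no Cayley graph of `G` has roundness
equal to 1 (i.e. `1 ∉ ρ(G)`), then `G` is a torsion group in which every non-identity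
element has order 2, 3, 5 or 7. -/
theorem torsion_of_one_not_mem_spectrum (G : Type*) [Group G] [Group.FG G]
    (h : ∀ S : Set G, S.Finite → (∀ s ∈ S, s⁻¹ ∈ S) → (1 : G) ∉ S →
      Subgroup.closure S = ⊤ → roundness (wordDist S) ≠ (1 : EReal)) :
    ∀ g : G, g ≠ 1 → orderOf g ∈ ({2, 3, 5, 7} : Set ℕ) := by
  intro g hg
  by_contra horder
  simp only [Set.mem_insert_iff, Set.mem_singleton_iff, not_or] at horder
  obtain ⟨ho2, ho3, ho5, ho7⟩ := horder
  -- power facts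
  have hppow : ∀ p : ℕ, p.Prime → orderOf g ≠ p → g ^ p ≠ 1 := by
    intro p hp hop he
    have hd := orderOf_dvd_of_pow_eq_one he
    rcases hp.eq_one_or_self_of_dvd _ hd with h1 | h1
    · exact hg (orderOf_eq_one_iff.mp h1)
    · exact hop h1
  have h2 : g ^ (2 : ℕ) ≠ 1 := hppow 2 Nat.prime_two ho2
  have h3 : g ^ (3 : ℕ) ≠ 1 := hppow 3 Nat.prime_three ho3
  have h5 : g ^ (5 : ℕ) ≠ 1 := hppow 5 (by norm_num) ho5
  -- the generating set
  obtain ⟨T, hTgen, hTfin⟩ := Group.fg_iff.mp ‹Group.FG G›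
  set Z : Set G := (Subgroup.zpowers g : Set G) with hZ
  set P : Set G := {g, g⁻¹, g ^ (3 : ℕ), (g ^ (3 : ℕ))⁻¹} with hP
  set Sg : Set G := ((T ∪ T⁻¹) \ Z) ∪ P with hSg
  have hgP : g ∈ Sg := Or.inr (Or.inl rfl)
  have hginvP : g⁻¹ ∈ Sg := Or.inr (Or.inr (Or.inl rfl))
  have hg3P : g ^ (3 : ℕ) ∈ Sg := Or.inr (Or.inr (Or.inr (Or.inl rfl)))
  have hg3invP : (g ^ (3 : ℕ))⁻¹ ∈ Sg := Or.inr (Or.inr (Or.inr (Or.inr rfl)))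
  have hg2Z : g ^ (2 : ℕ) ∈ Z := Subgroup.pow_mem _ (Subgroup.mem_zpowers g) 2
  have hg2not : g ^ (2 : ℕ) ∉ Sg := by
    rintro (⟨-, hnot⟩ | hmem)
    · exact hnot hg2Z
    · rcases hmem with he | he | he | he
      · exact hg (by calc g = g ^ (2:ℕ) * g⁻¹ := by group
                       _ = g * g⁻¹ := by rw [he]
                       _ = 1 := by group)
      · exact h3 (by calc g ^ (3:ℕ) = g ^ (2:ℕ) * g := by group
                       _ = g⁻¹ * g := by rw [he]
                       _ = 1 := by group)
      · exact hg (by calc g = (g ^ (2:ℕ))⁻¹ * g ^ (3:ℕ) := by group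
                       _ = (g ^ (2:ℕ))⁻¹ * g ^ (2:ℕ) := by rw [← he]
                       _ = 1 := by group)
      · exact h5 (by calc g ^ (5:ℕ) = g ^ (2:ℕ) * g ^ (3:ℕ) := by group
                       _ = (g ^ (3:ℕ))⁻¹ * g ^ (3:ℕ) := by rw [he]
                       _ = 1 := by group)
  -- the four hypotheses of h
  have hfin : Sg.Finite := by
    refine Set.Finite.union (Set.Finite.diff (hTfin.union hTfin.inv)) ?_
    simp only [hP]
    exact (Set.finite_singleton _).insert _ |>.insert _ |>.insert _
  have hsymm : ∀ s ∈ Sg, s⁻¹ ∈ Sg := by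
    rintro s (⟨hsT, hsZ⟩ | hsP)
    · refine Or.inl ⟨?_, ?_⟩
      · rcases hsT with hs | hs
        · exact Or.inr (by simpa using hs)
        · exact Or.inl (by simpa using hs)
      · intro hc
        exact hsZ (by simpa [hZ] using (Subgroup.zpowers g).inv_mem hc)
    · rcases hsP with rfl | rfl | rfl | rfl
      · exact hginvP
      · simpa using hgP
      · exact hg3invP
      · simpa using hg3P
  have h1not : (1 : G) ∉ Sg := by
    rintro (⟨-, hnZ⟩ | hmem)
    · exact hnZ (Subgroup.one_mem _)
    · rcases hmem with he | he | he | he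
      · exact hg he.symm
      · exact hg (by simpa using he.symm)
      · exact h3 he.symm
      · exact h3 (by simpa using he.symm)
  have hgen : Subgroup.closure Sg = ⊤ := by
    rw [eq_top_iff, ← hTgen]
    apply Subgroup.closure_le (Subgroup.closure Sg) |>.mpr
    intro t ht
    by_cases htZ : t ∈ Z
    · have hgmem : g ∈ Subgroup.closure Sg := Subgroup.subset_closure hgP
      exact Subgroup.zpowers_le.mpr hgmem htZ
    · exact Subgroup.subset_closure (Or.inl ⟨Or.inl ht, htZ⟩)
  -- distance computations
  have wl2 : wordLength Sg (g ^ (2 : ℕ)) = 2 :=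
    wl_two _ g g hgP hgP (pow_two g).symm h2 hg2not
  have e1 : wordDist Sg 1 (g ^ (2:ℕ)) = 2 := by
    unfold wordDist
    rw [inv_one, one_mul, wl2]; norm_num
  have e2 : wordDist Sg g (g ^ (3:ℕ)) = 2 := by
    unfold wordDist
    have : g⁻¹ * g ^ (3:ℕ) = g ^ (2:ℕ) := by group
    rw [this, wl2]; norm_num
  have e3 : wordDist Sg 1 g = 1 := by
    unfold wordDist
    rw [inv_one, one_mul, wl_one_of_mem hgP hg]; norm_num
  have e4 : wordDist Sg 1 (g ^ (3:ℕ)) = 1 := by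
    unfold wordDist
    rw [inv_one, one_mul, wl_one_of_mem hg3P h3]; norm_num
  have e5 : wordDist Sg (g ^ (2:ℕ)) g = 1 := by
    unfold wordDist
    have : (g ^ (2:ℕ))⁻¹ * g = g⁻¹ := by group
    rw [this, wl_one_of_mem hginvP (by simpa using hg)]; norm_num
  have e6 : wordDist Sg (g ^ (2:ℕ)) (g ^ (3:ℕ)) = 1 := by
    unfold wordDist
    have : (g ^ (2:ℕ))⁻¹ * g ^ (3:ℕ) = g := by group
    rw [this, wl_one_of_mem hgP hg]; norm_num
  -- roundness set is {1}
  have hset : roundnessSet (wordDist Sg) = {1} := by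
    ext q
    simp only [Set.mem_singleton_iff]
    constructor
    · rintro ⟨hq1, hall⟩
      have key := hall 1 g (g ^ (3:ℕ)) (g ^ (2:ℕ))
      rw [e1, e2, e3, e4, e5, e6, Real.one_rpow] at key
      by_contra hqne
      have hq : 1 < q := lt_of_le_of_ne hq1 (Ne.symm hqne)
      have : (2 : ℝ) ^ (1:ℝ) < (2:ℝ) ^ q :=
        Real.rpow_lt_rpow_of_exponent_lt (by norm_num) hq
      rw [Real.rpow_one] at this
      linarith
    · rintro rfl
      refine ⟨le_refl 1, fun x00 x01 x10 x11 => ?_⟩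
      simp only [Real.rpow_one]
      have tri : ∀ a b c : G, wordDist Sg a c ≤ wordDist Sg a b + wordDist Sg b c := by
        intro a b c
        unfold wordDist
        have : a⁻¹ * c = (a⁻¹ * b) * (b⁻¹ * c) := by group
        rw [this]
        have := wl_mul_le hsymm hgen (a⁻¹ * b) (b⁻¹ * c)
        exact_mod_cast this
      have dsymm : ∀ a b : G, wordDist Sg a b = wordDist Sg b a := by
        intro a b
        unfold wordDist
        have : b⁻¹ * a = (a⁻¹ * b)⁻¹ := by group
        rw [this, wl_inv hsymm]
      have t1 := tri x00 x01 x11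
      have t2 := tri x00 x10 x11
      have t3 := tri x01 x00 x10
      have t4 := tri x01 x11 x10
      have s1 := dsymm x01 x11
      have s2 := dsymm x10 x11
      have s3 := dsymm x01 x00
      linarith
  have : roundness (wordDist Sg) = (1 : EReal) := by
    unfold roundness
    rw [hset, Set.image_singleton, sSup_singleton]
    norm_num
  exact h Sg hfin hsymm h1not hgen this
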